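/- Let n ≥ 1, L > 0, and let f : ℝⁿ → ℝ belong to F_{−L,L}. Assume the set X⋆ of global minimizers of f is nonempty, with minimum value f⋆, and that f has quadratic functional growth with constant μ_q ∈ (L/2, L) on the sublevel set X = {x : f(x) ≤ f(x¹)} of a point x¹ ∈ ℝⁿ. Let the gradient-descent iterates be defined by x^{k+1} = x^k − (1/L)∇f(x^k) for k = 1, …, N. Then f(x^{N+1}) − f⋆ ≤ ( (2L² − 2(μ_q − L/2)²)/(2L² + (μ_q − L/2)²) )^N · (f(x¹) − f⋆). -/

import Mathlib

open Set
open scoped RealInnerProductSpace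

-- first-order condition for convex differentiable functions
theorem my_convex_subgrad {n : ℕ} {h : EuclideanSpace ℝ (Fin n) → ℝ}
    {h' : EuclideanSpace ℝ (Fin n) → EuclideanSpace ℝ (Fin n)}
    (hc : ConvexOn ℝ univ h) (hg : ∀ z, HasGradientAt h (h' z) z)
    (a b : EuclideanSpace ℝ (Fin n)) :
    h a + ⟪h' a, b - a⟫ ≤ h b := by
  set v := b - a with hv
  have hline : HasDerivAt (fun t : ℝ => a + t • v) v 0 := by
    simpa using ((hasDerivAt_id (0:ℝ)).smul_const v).const_add a
  have hF : HasFDerivAt h (InnerProductSpace.toDual ℝ _ (h' a)) a :=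
    hasGradientAt_iff_hasFDerivAt.mp (hg a)
  have hD : HasDerivAt (fun t : ℝ => h (a + t • v)) ⟪h' a, v⟫ 0 := by
    have h0 : a + (0:ℝ) • v = a := by simp
    have hF' : HasFDerivAt h ((InnerProductSpace.toDual ℝ (EuclideanSpace ℝ (Fin n))) (h' a))
        (a + (0:ℝ) • v) := by rw [h0]; exact hF
    have := hF'.comp_hasDerivAt 0 hline
    exact this
  have hslope : Filter.Tendsto (slope (fun t : ℝ => h (a + t • v)) 0) (nhdsWithin 0 (Ioi 0))
      (nhds ⟪h' a, v⟫) := by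
    refine (hasDerivAt_iff_tendsto_slope.mp hD).mono_left (nhdsWithin_mono _ ?_)
    intro t ht
    exact ne_of_gt ht
  have hev : ∀ᶠ t in nhdsWithin (0:ℝ) (Ioi 0),
      slope (fun t : ℝ => h (a + t • v)) 0 t ≤ h b - h a := by
    filter_upwards [Ioc_mem_nhdsGT_of_mem (by norm_num : (0:ℝ) ∈ Ico (0:ℝ) 1)] with t ht
    have hcomb : h (a + t • v) ≤ (1 - t) * h a + t * h b := by
      have hco := hc.2 (mem_univ a) (mem_univ b) (by linarith [ht.2] : (0:ℝ) ≤ 1 - t)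
        (le_of_lt ht.1) (by ring)
      have : (1 - t) • a + t • b = a + t • v := by
        rw [hv]; module
      rwa [this] at hco
    rw [slope_def_field, div_le_iff₀ (by simpa using ht.1 : (0:ℝ) < t - 0)]
    simp only [zero_smul, add_zero, sub_zero]
    nlinarith [ht.1.le]
  have := le_of_tendsto hslope hev
  linarith

theorem my_upper_bound {n : ℕ} {f : EuclideanSpace ℝ (Fin n) → ℝ}
    {f' : EuclideanSpace ℝ (Fin n) → EuclideanSpace ℝ (Fin n)} {L : ℝ} (hL : 0 < L)
    (hgrad : ∀ x, HasGradientAt f (f' x) x)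
    (hupper : ConvexOn ℝ univ (fun x => L / 2 * ‖x‖ ^ 2 - f x))
    (a b : EuclideanSpace ℝ (Fin n)) :
    f b ≤ f a + ⟪f' a, b - a⟫ + L / 2 * ‖b - a‖ ^ 2 := by
  have hφ : ∀ z, HasGradientAt (fun w => L / 2 * ‖w‖ ^ 2 - f w) (L • z - f' z) z := by
    intro z
    rw [hasGradientAt_iff_hasFDerivAt]
    have h1 : HasFDerivAt (fun w : EuclideanSpace ℝ (Fin n) => L / 2 * ‖w‖ ^ 2)
        ((L / 2) • (2 • (innerSL ℝ z))) z :=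
      (hasStrictFDerivAt_norm_sq z).hasFDerivAt.const_smul (L / 2)
    have h2 := h1.sub (hasGradientAt_iff_hasFDerivAt.mp (hgrad z))
    refine h2.congr_fderiv ?_
    ext y
    simp [inner_sub_left, real_inner_smul_left, innerSL_apply_apply]
    ring
  have h3 := my_convex_subgrad hupper hφ a b
  have hab : a + (b - a) = b := by abel
  have hb2 : ‖b‖ ^ 2 = ‖a‖ ^ 2 + 2 * ⟪a, b - a⟫ + ‖b - a‖ ^ 2 := by
    have := norm_add_sq_real a (b - a)
    rwa [hab] at this
  have hi : ⟪L • a - f' a, b - a⟫ = L * ⟪a, b - a⟫ - ⟪f' a, b - a⟫ := by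
    rw [inner_sub_left, real_inner_smul_left]
  rw [hi] at h3
  ring_nf at h3
  nlinarith [h3]

theorem my_lower_bound {n : ℕ} {f : EuclideanSpace ℝ (Fin n) → ℝ}
    {f' : EuclideanSpace ℝ (Fin n) → EuclideanSpace ℝ (Fin n)} {L : ℝ} (hL : 0 < L)
    (hgrad : ∀ x, HasGradientAt f (f' x) x)
    (hlower : ConvexOn ℝ univ (fun x => f x - (-L) / 2 * ‖x‖ ^ 2))
    (a b : EuclideanSpace ℝ (Fin n)) :
    f a + ⟪f' a, b - a⟫ - L / 2 * ‖b - a‖ ^ 2 ≤ f b := by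
  have hψc : ConvexOn ℝ univ (fun w : EuclideanSpace ℝ (Fin n) => f w + L / 2 * ‖w‖ ^ 2) := by
    have : (fun w : EuclideanSpace ℝ (Fin n) => f w - (-L) / 2 * ‖w‖ ^ 2)
        = fun w => f w + L / 2 * ‖w‖ ^ 2 := by funext w; ring
    rwa [this] at hlower
  have hψ : ∀ z, HasGradientAt (fun w => f w + L / 2 * ‖w‖ ^ 2) (f' z + L • z) z := by
    intro z
    rw [hasGradientAt_iff_hasFDerivAt]
    have h1 : HasFDerivAt (fun w : EuclideanSpace ℝ (Fin n) => L / 2 * ‖w‖ ^ 2)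
        ((L / 2) • (2 • (innerSL ℝ z))) z :=
      (hasStrictFDerivAt_norm_sq z).hasFDerivAt.const_smul (L / 2)
    have h2 := (hasGradientAt_iff_hasFDerivAt.mp (hgrad z)).add h1
    refine h2.congr_fderiv ?_
    ext y
    simp [inner_add_left, real_inner_smul_left, innerSL_apply_apply]
    ring
  have h3 := my_convex_subgrad hψc hψ a b
  have hab : a + (b - a) = b := by abel
  have hb2 : ‖b‖ ^ 2 = ‖a‖ ^ 2 + 2 * ⟪a, b - a⟫ + ‖b - a‖ ^ 2 := by
    have := norm_add_sq_real a (b - a)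
    rwa [hab] at this
  have hi : ⟪f' a + L • a, b - a⟫ = ⟪f' a, b - a⟫ + L * ⟪a, b - a⟫ := by
    rw [inner_add_left, real_inner_smul_left]
  rw [hi] at h3
  ring_nf at h3
  nlinarith [h3]

theorem my_strong_lower {n : ℕ} {f : EuclideanSpace ℝ (Fin n) → ℝ}
    {f' : EuclideanSpace ℝ (Fin n) → EuclideanSpace ℝ (Fin n)} {L : ℝ} (hL : 0 < L)
    (hgrad : ∀ x, HasGradientAt f (f' x) x)
    (hupper : ConvexOn ℝ univ (fun x => L / 2 * ‖x‖ ^ 2 - f x))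
    (hlower : ConvexOn ℝ univ (fun x => f x - (-L) / 2 * ‖x‖ ^ 2))
    (a b : EuclideanSpace ℝ (Fin n)) :
    f a + ⟪f' a, b - a⟫ - L / 2 * ‖b - a‖ ^ 2
      + 1 / (4 * L) * ‖L • (b - a) + (f' b - f' a)‖ ^ 2 ≤ f b := by
  have hL' : L ≠ 0 := ne_of_gt hL
  set u := b - a with hu
  set D := L • u + (f' b - f' a) with hD
  set t : ℝ := 1 / (2 * L) with ht
  have hlo := my_lower_bound hL hgrad hlower a (b - t • D)
  have hup := my_upper_bound hL hgrad hupper b (b - t • D)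
  have e1 : b - t • D - a = u - t • D := by rw [hu]; abel
  have e2 : b - t • D - b = -(t • D) := by abel
  rw [e1] at hlo
  rw [e2] at hup
  have n1 : ‖u - t • D‖ ^ 2 = ‖u‖ ^ 2 - 2 * (t * ⟪u, D⟫) + t ^ 2 * ‖D‖ ^ 2 := by
    rw [norm_sub_sq_real, real_inner_smul_right, norm_smul]
    rw [mul_pow, Real.norm_eq_abs, sq_abs]
  have n2 : ‖-(t • D)‖ ^ 2 = t ^ 2 * ‖D‖ ^ 2 := by
    rw [norm_neg, norm_smul, mul_pow, Real.norm_eq_abs, sq_abs]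
  have i1 : ⟪f' a, u - t • D⟫ = ⟪f' a, u⟫ - t * ⟪f' a, D⟫ := by
    rw [inner_sub_right, real_inner_smul_right]
  have i2 : ⟪f' b, -(t • D)⟫ = -(t * ⟪f' b, D⟫) := by
    rw [inner_neg_right, real_inner_smul_right]
  have hkey : L * ⟪u, D⟫ + ⟪f' b, D⟫ - ⟪f' a, D⟫ = ‖D‖ ^ 2 := by
    have h1 : ⟪L • u + (f' b - f' a), D⟫ = L * ⟪u, D⟫ + (⟪f' b, D⟫ - ⟪f' a, D⟫) := by
      rw [inner_add_left, inner_sub_left, real_inner_smul_left]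
    rw [← hD] at h1
    have h2 : ⟪D, D⟫ = ‖D‖ ^ 2 := real_inner_self_eq_norm_sq D
    linarith
  have hLt : L * t = 1 / 2 := by rw [ht]; field_simp
  have hmul1 : L * (t ^ 2 * ‖D‖ ^ 2) = 1 / 2 * (t * ‖D‖ ^ 2) := by
    have : L * (t ^ 2 * ‖D‖ ^ 2) = (L * t) * (t * ‖D‖ ^ 2) := by ring
    rw [this, hLt]
  have hkey_t : t * (L * ⟪u, D⟫) + t * ⟪f' b, D⟫ - t * ⟪f' a, D⟫ = t * ‖D‖ ^ 2 := by
    linear_combination t * hkey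
  have hq : 1 / (4 * L) = t / 2 := by rw [ht]; field_simp; ring
  rw [n1, i1] at hlo
  rw [n2, i2] at hup
  rw [hq]
  nlinarith [hlo, hup, hkey_t, hmul1]

set_option maxHeartbeats 1000000 in
theorem my_step_scalar (L ν s r Δ Δp : ℝ) (hL : 0 < L) (hν : 0 < ν) (hν2 : ν < L / 2)
    (h1 : 4 * L * Δ ≤ 2 * L * (s * r) + L ^ 2 * r ^ 2 - s ^ 2)
    (h2 : (L / 2 + ν) / 2 * r ^ 2 ≤ Δ)
    (h3 : Δp ≤ Δ - s ^ 2 / (2 * L))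
    (hΔ : 0 ≤ Δ) :
    Δp ≤ (2 * L ^ 2 - 2 * ν ^ 2) / (2 * L ^ 2 + ν ^ 2) * Δ := by
  have hq : (0:ℝ) < 2 * L ^ 2 + ν ^ 2 := by positivity
  obtain ⟨a', ha'⟩ : ∃ a' : ℝ, a' = (11 / 2) * ν * (2 * L ^ 2 + ν ^ 2) := ⟨_, rfl⟩
  obtain ⟨b', hb'⟩ : ∃ b' : ℝ, b' = L * a' - 6 * L ^ 2 * ν ^ 2 := ⟨_, rfl⟩
  obtain ⟨S, hS⟩ : ∃ S : ℝ, S = 4 * L * (2 * L ^ 2 + ν ^ 2) + a' := ⟨_, rfl⟩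
  have ha'0 : 0 ≤ a' := by rw [ha']; positivity
  have hb'0 : 0 ≤ b' := by rw [hb', ha']; nlinarith [sq_nonneg (L - ν)]
  have hS0 : (0:ℝ) < S := by rw [hS]; positivity
  have hdisc : 0 ≤ S * (-(L ^ 2) * a' + (L + 2 * ν) * b') - L ^ 2 * a' ^ 2 := by
    have hexp : S * (-(L ^ 2) * a' + (L + 2 * ν) * b') - L ^ 2 * a' ^ 2
        = 7 * L ^ 6 * ν ^ 2 + 80 * L ^ 5 * ν ^ 3 - 101 * L ^ 4 * ν ^ 4
          + 161 * L ^ 3 * ν ^ 5 - (209 / 4) * L ^ 2 * ν ^ 6 + (121 / 2) * L * ν ^ 7 := by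
      rw [hS, hb', ha']; ring
    rw [hexp]
    have e1 : 101 * L ^ 4 * ν ^ 4 ≤ (101 / 2) * L ^ 5 * ν ^ 3 := by
      nlinarith [mul_le_mul_of_nonneg_left hν2.le (by positivity : (0:ℝ) ≤ 101 * L ^ 4 * ν ^ 3)]
    have e2 : (209 / 4) * L ^ 2 * ν ^ 6 ≤ (209 / 8) * L ^ 3 * ν ^ 5 := by
      nlinarith [mul_le_mul_of_nonneg_left hν2.le (by positivity : (0:ℝ) ≤ (209 / 4) * L ^ 2 * ν ^ 5)]
    have p1 : (0:ℝ) ≤ L ^ 6 * ν ^ 2 := by positivity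
    have p2 : (0:ℝ) ≤ L ^ 5 * ν ^ 3 := by positivity
    have p3 : (0:ℝ) ≤ L ^ 3 * ν ^ 5 := by positivity
    have p4 : (0:ℝ) ≤ L * ν ^ 7 := by positivity
    linarith
  have hkey : 6 * L * ν ^ 2 * Δ ≤ (2 * L ^ 2 + ν ^ 2) * s ^ 2 := by
    have hA : 0 ≤ 2 * L * (s * r) + L ^ 2 * r ^ 2 - s ^ 2 - 4 * L * Δ := by linarith
    have hB : 0 ≤ 4 * Δ - L * r ^ 2 - 2 * ν * r ^ 2 := by linarith
    have hid : S * (4 * L * ((2 * L ^ 2 + ν ^ 2) * s ^ 2 - 6 * L * ν ^ 2 * Δ))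
        = S * a' * (2 * L * (s * r) + L ^ 2 * r ^ 2 - s ^ 2 - 4 * L * Δ)
          + S * b' * (4 * Δ - L * r ^ 2 - 2 * ν * r ^ 2)
          + (S * s - L * a' * r) ^ 2
          + (S * (-(L ^ 2) * a' + (L + 2 * ν) * b') - L ^ 2 * a' ^ 2) * r ^ 2 := by
      rw [hS, hb', ha']; ring
    have hrhs : 0 ≤ S * (4 * L * ((2 * L ^ 2 + ν ^ 2) * s ^ 2 - 6 * L * ν ^ 2 * Δ)) := by
      rw [hid]
      have t1 : 0 ≤ S * a' * (2 * L * (s * r) + L ^ 2 * r ^ 2 - s ^ 2 - 4 * L * Δ) :=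
        mul_nonneg (mul_nonneg hS0.le ha'0) hA
      have t2 : 0 ≤ S * b' * (4 * Δ - L * r ^ 2 - 2 * ν * r ^ 2) :=
        mul_nonneg (mul_nonneg hS0.le hb'0) hB
      have t3 : 0 ≤ (S * s - L * a' * r) ^ 2 := sq_nonneg _
      have t4 : 0 ≤ (S * (-(L ^ 2) * a' + (L + 2 * ν) * b') - L ^ 2 * a' ^ 2) * r ^ 2 :=
        mul_nonneg hdisc (sq_nonneg r)
      linarith
    have h6 : 0 ≤ 4 * L * ((2 * L ^ 2 + ν ^ 2) * s ^ 2 - 6 * L * ν ^ 2 * Δ) :=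
      (mul_nonneg_iff_of_pos_left hS0).mp hrhs
    have h7 : 0 ≤ (2 * L ^ 2 + ν ^ 2) * s ^ 2 - 6 * L * ν ^ 2 * Δ :=
      (mul_nonneg_iff_of_pos_left (by positivity : (0:ℝ) < 4 * L)).mp h6
    linarith
  have h5 : 3 * ν ^ 2 * Δ ≤ (2 * L ^ 2 + ν ^ 2) * (s ^ 2 / (2 * L)) := by
    rw [mul_div_assoc']
    rw [le_div_iff₀ (by positivity : (0:ℝ) < 2 * L)]
    nlinarith [hkey]
  rw [div_mul_eq_mul_div, le_div_iff₀ hq]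
  nlinarith [mul_le_mul_of_nonneg_right h3 hq.le, h5]

set_option maxHeartbeats 1000000 in
theorem stmt_14 (n : ℕ) (hn : 1 ≤ n)
    (f : EuclideanSpace ℝ (Fin n) → ℝ)
    (f' : EuclideanSpace ℝ (Fin n) → EuclideanSpace ℝ (Fin n))
    (L : ℝ) (hL : 0 < L)
    (hgrad : ∀ x, HasGradientAt f (f' x) x)
    (hupper : ConvexOn ℝ univ (fun x => L / 2 * ‖x‖ ^ 2 - f x))
    (hlower : ConvexOn ℝ univ (fun x => f x - (-L) / 2 * ‖x‖ ^ 2))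
    (xs : EuclideanSpace ℝ (Fin n)) (hxs : ∀ z, f xs ≤ f z)
    (μq : ℝ) (hμq : μq ∈ Ioo (L / 2) L)
    (N : ℕ) (x : ℕ → EuclideanSpace ℝ (Fin n))
    (hiter : ∀ k, 1 ≤ k → k ≤ N → x (k + 1) = x k - (1 / L) • f' (x k))
    (hQF : ∀ y, f y ≤ f (x 1) →
      μq / 2 * (Metric.infDist y {z | ∀ w, f z ≤ f w}) ^ 2 ≤ f y - f xs) :
    f (x (N + 1)) - f xs ≤
      ((2 * L ^ 2 - 2 * (μq - L / 2) ^ 2) / (2 * L ^ 2 + (μq - L / 2) ^ 2)) ^ N *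
        (f (x 1) - f xs) := by
  have hL' : L ≠ 0 := ne_of_gt hL
  set ρ : ℝ := (2 * L ^ 2 - 2 * (μq - L / 2) ^ 2) / (2 * L ^ 2 + (μq - L / 2) ^ 2) with hρ
  have hν : 0 < μq - L / 2 := by linarith [hμq.1]
  have hν2 : μq - L / 2 < L / 2 := by linarith [hμq.2]
  have hρ0 : 0 ≤ ρ := by
    rw [hρ]
    apply div_nonneg
    · nlinarith
    · positivity
  -- the set of minimizers
  set Xs : Set (EuclideanSpace ℝ (Fin n)) := {z | ∀ w, f z ≤ f w} with hXs
  have hcont : Continuous f :=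
    Differentiable.continuous (fun z => (hgrad z).differentiableAt)
  have hXsclosed : IsClosed Xs := by
    have : Xs = ⋂ w, {z | f z ≤ f w} := by
      ext z; simp [hXs, Set.mem_iInter, Set.mem_setOf_eq]
    rw [this]
    exact isClosed_iInter (fun w => isClosed_le hcont continuous_const)
  have hXsne : Xs.Nonempty := ⟨xs, hxs⟩
  have hgz : ∀ y ∈ Xs, f' y = 0 := by
    intro y hy
    have hmin : IsLocalMin f y := Filter.Eventually.of_forall hy
    have h0 := hmin.hasFDerivAt_eq_zero (hasGradientAt_iff_hasFDerivAt.mp (hgrad y))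
    have := congrArg (fun φ => (InnerProductSpace.toDual ℝ (EuclideanSpace ℝ (Fin n))).symm φ) h0
    simpa using this
  -- descent step
  have descent : ∀ z : EuclideanSpace ℝ (Fin n),
      f (z - (1 / L) • f' z) ≤ f z - ‖f' z‖ ^ 2 / (2 * L) := by
    intro z
    have hub := my_upper_bound hL hgrad hupper z (z - (1 / L) • f' z)
    have e1 : z - (1 / L) • f' z - z = -((1 / L) • f' z) := by abel
    rw [e1] at hub
    have e2 : ⟪f' z, -((1 / L) • f' z)⟫ = -((1 / L) * ‖f' z‖ ^ 2) := by
      rw [inner_neg_right, real_inner_smul_right, real_inner_self_eq_norm_sq]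
    have e3 : ‖-((1 / L) • f' z)‖ ^ 2 = (1 / L) ^ 2 * ‖f' z‖ ^ 2 := by
      rw [norm_neg, norm_smul, mul_pow, Real.norm_eq_abs, sq_abs]
    rw [e2, e3] at hub
    have e4 : (1 / L) * ‖f' z‖ ^ 2 - L / 2 * ((1 / L) ^ 2 * ‖f' z‖ ^ 2)
        = ‖f' z‖ ^ 2 / (2 * L) := by field_simp; ring
    linarith
  -- contraction step
  have key : ∀ z : EuclideanSpace ℝ (Fin n), f z ≤ f (x 1) →
      f (z - (1 / L) • f' z) - f xs ≤ ρ * (f z - f xs) := by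
    intro z hz
    obtain ⟨y, hyS, hydist⟩ := hXsclosed.exists_infDist_eq_dist hXsne z
    have hfy : f y = f xs := le_antisymm (hyS xs) (hxs y)
    have hgy : f' y = 0 := hgz y hyS
    have hI1 := my_strong_lower hL hgrad hupper hlower z y
    rw [hgy] at hI1
    -- expand the squared norm
    have p1 : ‖L • (y - z)‖ ^ 2 = L ^ 2 * ‖z - y‖ ^ 2 := by
      rw [norm_smul, mul_pow, Real.norm_eq_abs, sq_abs, norm_sub_rev y z]
    have p2 : ⟪L • (y - z), 0 - f' z⟫ = -(L * ⟪y - z, f' z⟫) := by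
      rw [zero_sub, inner_neg_right, real_inner_smul_left]
    have p3 : ‖(0 : EuclideanSpace ℝ (Fin n)) - f' z‖ ^ 2 = ‖f' z‖ ^ 2 := by
      rw [zero_sub, norm_neg]
    have hflip2 : ⟪y - z, f' z⟫ = -⟪z - y, f' z⟫ := by
      rw [show (y - z) = -(z - y) from by abel, inner_neg_left]
    have hflip : ⟪f' z, y - z⟫ = -⟪z - y, f' z⟫ := by
      rw [real_inner_comm, hflip2]
    have hD2 : ‖L • (y - z) + (0 - f' z)‖ ^ 2
        = L ^ 2 * ‖z - y‖ ^ 2 + 2 * (L * ⟪z - y, f' z⟫) + ‖f' z‖ ^ 2 := by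
      rw [norm_add_sq_real, p1, p2, p3, hflip2]; ring
    rw [hfy, hD2, hflip, norm_sub_rev y z] at hI1
    have h4L : (0:ℝ) < 4 * L := by positivity
    have hx0 : 1 / (4 * L) * (L ^ 2 * ‖z - y‖ ^ 2 + 2 * (L * ⟪z - y, f' z⟫) + ‖f' z‖ ^ 2)
        ≤ f xs - f z + ⟪z - y, f' z⟫ + L / 2 * ‖z - y‖ ^ 2 := by linarith
    rw [one_div, inv_mul_eq_div, div_le_iff₀ h4L] at hx0
    have h1 : 4 * L * (f z - f xs)
        ≤ 2 * L * (‖f' z‖ * ‖z - y‖) + L ^ 2 * ‖z - y‖ ^ 2 - ‖f' z‖ ^ 2 := by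
      have hCS : ⟪z - y, f' z⟫ ≤ ‖z - y‖ * ‖f' z‖ := real_inner_le_norm _ _
      have hCS2 := mul_le_mul_of_nonneg_left hCS (by positivity : (0:ℝ) ≤ 2 * L)
      nlinarith [hx0, hCS2]
    have h2' : (L / 2 + (μq - L / 2)) / 2 * ‖z - y‖ ^ 2 ≤ f z - f xs := by
      have hq2 := hQF z hz
      rw [hydist, dist_eq_norm] at hq2
      have he : L / 2 + (μq - L / 2) = μq := by ring
      rw [he]
      exact hq2
    have h3' : f (z - (1 / L) • f' z) - f xs ≤ (f z - f xs) - ‖f' z‖ ^ 2 / (2 * L) := by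
      linarith [descent z]
    have hΔ' : (0:ℝ) ≤ f z - f xs := by linarith [hxs z]
    have hfin := my_step_scalar L (μq - L / 2) (‖f' z‖) (‖z - y‖) (f z - f xs)
      (f (z - (1 / L) • f' z) - f xs) hL hν hν2 h1 h2' h3' hΔ'
    rw [hρ]
    exact hfin
  -- induction over the iterates
  have main : ∀ j : ℕ, j ≤ N →
      f (x (j + 1)) ≤ f (x 1) ∧ f (x (j + 1)) - f xs ≤ ρ ^ j * (f (x 1) - f xs) := by
    intro j
    induction j with
    | zero => intro _; exact ⟨le_refl _, by simp⟩
    | succ m ih =>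
      intro hm
      have hmN : m ≤ N := Nat.le_of_succ_le hm
      obtain ⟨ih1, ih2⟩ := ih hmN
      have hx2 : x (m + 1 + 1) = x (m + 1) - (1 / L) • f' (x (m + 1)) :=
        hiter (m + 1) (Nat.le_add_left 1 m) hm
      constructor
      · rw [hx2]
        have hd := descent (x (m + 1))
        have hnn : 0 ≤ ‖f' (x (m + 1))‖ ^ 2 / (2 * L) := by positivity
        linarith
      · rw [hx2]
        have hk := key (x (m + 1)) ih1
        calc f (x (m + 1) - (1 / L) • f' (x (m + 1))) - f xs
            ≤ ρ * (f (x (m + 1)) - f xs) := hk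
          _ ≤ ρ * (ρ ^ m * (f (x 1) - f xs)) := mul_le_mul_of_nonneg_left ih2 hρ0
          _ = ρ ^ (m + 1) * (f (x 1) - f xs) := by ring
  exact (main N (le_refl N)).2
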